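/- Let G be a finite non-abelian p-group with a unique non-trivial proper characteristic subgroup N. Then both G/N and N are elementary abelian p-groups. -/

import Mathlib

open scoped commutatorElement

private lemma pow_inj_aux {Q : Type*} [Group Q] {p : ℕ}
    (hinj : Function.Injective (fun x : Q => x ^ p)) (x : Q) :
    ∀ k : ℕ, x ^ p ^ k = 1 → x = 1 := by
  intro k
  induction k with
  | zero => intro h; simpa using h
  | succ n ih =>
      intro h
      apply ih
      apply hinj
      show (x ^ p ^ n) ^ p = 1 ^ p
      rw [← pow_mul, ← pow_succ, h, one_pow]

private lemma exists_pow_p_eq_one {Q : Type*} [Group Q] {p : ℕ} (x : Q) (hx : x ≠ 1) :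
    ∀ k : ℕ, x ^ p ^ k = 1 → ∃ y : Q, y ≠ 1 ∧ y ^ p = 1
  | 0, h => absurd (by simpa using h) hx
  | k + 1, h => by
      by_cases hk : x ^ p ^ k = 1
      · exact exists_pow_p_eq_one x hx k hk
      · exact ⟨x ^ p ^ k, hk, by rw [← pow_mul, ← pow_succ]; exact h⟩

/-- If `G` is a finite non-abelian `p`-group whose only characteristic
subgroups are `⊥`, `N` and `⊤` (with `⊥ < N < ⊤`), then both `G/N` and `N` are
elementary abelian `p`-groups. -/
theorem stmt3 {p : ℕ} [Fact p.Prime] {G : Type*} [Group G] [Finite G]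
    (hp : IsPGroup p G) (hna : ¬ ∀ x y : G, x * y = y * x)
    (N : Subgroup G) (hchar : N.Characteristic) (hbot : N ≠ ⊥) (htop : N ≠ ⊤)
    (huniq : ∀ H : Subgroup G, H.Characteristic → H = ⊥ ∨ H = N ∨ H = ⊤) :
    (∀ a b : G ⧸ N, a * b = b * a) ∧ (∀ a : G ⧸ N, a ^ p = 1) ∧
    (∀ a b : N, a * b = b * a) ∧ (∀ a : N, a ^ p = 1) := by
  have hGnt : Nontrivial G := by
    rcases subsingleton_or_nontrivial G with h | h
    · exact absurd (Subsingleton.elim N ⊥) hbot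
    · exact h
  -- commutator G ≠ ⊥
  have hDne : commutator G ≠ ⊥ := by
    intro h
    apply hna
    intro x y
    have : ⁅x, y⁆ ∈ commutator G := by
      rw [commutator_def]
      exact Subgroup.commutator_mem_commutator (Subgroup.mem_top x) (Subgroup.mem_top y)
    rw [h, Subgroup.mem_bot] at this
    exact (commutatorElement_eq_one_iff_commute.mp this)
  -- commutator G ≠ ⊤ (nilpotency)
  have hDnt : commutator G ≠ ⊤ := by
    intro h
    have hnil := hp.isNilpotent
    obtain ⟨n, hn⟩ := nilpotent_iff_lowerCentralSeries.mp hnil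
    have hall : ∀ m, Subgroup.lowerCentralSeries (⊤ : Subgroup G) m = ⊤ := by
      intro m
      induction m with
      | zero => rfl
      | succ k ih =>
          show ⁅Subgroup.lowerCentralSeries (⊤ : Subgroup G) k, (⊤ : Subgroup G)⁆ = ⊤
          rw [ih]
          exact h
    obtain ⟨x, hx⟩ := exists_ne (1 : G)
    apply hx
    have hxm := Subgroup.mem_top x
    rw [← hall n, hn, Subgroup.mem_bot] at hxm
    exact hxm
  have hD : commutator G = N := by
    rcases huniq (commutator G) inferInstance with h | h | h
    · exact absurd h hDne
    · exact h
    · exact absurd h hDnt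
  -- center G = N
  have hZ : Subgroup.center G = N := by
    rcases huniq (Subgroup.center G) inferInstance with h | h | h
    · exfalso
      have := hp.center_nontrivial
      rw [h] at this
      exact not_nontrivial _ this
    · exact h
    · exfalso
      apply hna
      intro x y
      have : y ∈ Subgroup.center G := by rw [h]; trivial
      exact Subgroup.mem_center_iff.mp this x
  -- G/N is abelian
  have hcommQ : ∀ a b : G ⧸ N, a * b = b * a := by
    intro a b
    obtain ⟨x, rfl⟩ := QuotientGroup.mk_surjective a
    obtain ⟨y, rfl⟩ := QuotientGroup.mk_surjective b
    show ((x * y : G) : G ⧸ N) = ((y * x : G) : G ⧸ N)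
    rw [QuotientGroup.eq]
    have h1 : ⁅y⁻¹, x⁻¹⁆ ∈ commutator G := by
      rw [commutator_def]
      exact Subgroup.commutator_mem_commutator (Subgroup.mem_top _) (Subgroup.mem_top _)
    rw [hD] at h1
    have h2 : (x * y)⁻¹ * (y * x) = ⁅y⁻¹, x⁻¹⁆ := by
      rw [commutatorElement_def]
      group
    rw [h2]
    exact h1
  -- the characteristic subgroup generated by p-th powers and commutators
  set S : Set G := {x | ∃ g : G, g ^ p = x} with hS
  set H : Subgroup G := Subgroup.closure S ⊔ commutator G with hHdef
  have hSinv : ∀ φ : G ≃* G, φ.toMonoidHom '' S = S := by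
    intro φ
    ext x
    constructor
    · rintro ⟨s, ⟨g, rfl⟩, rfl⟩
      exact ⟨φ g, (map_pow φ.toMonoidHom g p).symm⟩
    · rintro ⟨g, rfl⟩
      exact ⟨(φ.symm g) ^ p, ⟨φ.symm g, rfl⟩, by
        rw [map_pow]; simp⟩
  have hHchar : H.Characteristic := by
    rw [Subgroup.characteristic_iff_map_eq]
    intro φ
    rw [hHdef, Subgroup.map_sup, MonoidHom.map_closure, hSinv φ,
      Subgroup.characteristic_iff_map_eq.mp inferInstance φ]
  have hHne : H ≠ ⊥ := by
    intro h
    apply hDne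
    have : commutator G ≤ H := le_sup_right
    rw [h] at this
    exact le_bot_iff.mp this
  have hQnt : Nontrivial (G ⧸ N) := by
    rcases subsingleton_or_nontrivial (G ⧸ N) with h | h
    · exfalso
      apply htop
      ext x
      simp only [Subgroup.mem_top, iff_true]
      rw [← QuotientGroup.eq_one_iff]
      exact Subsingleton.elim _ _
    · exact h
  have hHnt : H ≠ ⊤ := by
    intro h
    -- then every element of G ⧸ N is a p-th power
    set T : Subgroup (G ⧸ N) :=
      { carrier := {y | ∃ z : G ⧸ N, z ^ p = y}
        one_mem' := ⟨1, one_pow p⟩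
        mul_mem' := by
          rintro a b ⟨z, rfl⟩ ⟨w, rfl⟩
          exact ⟨z * w, Commute.mul_pow (hcommQ z w) p⟩
        inv_mem' := by
          rintro a ⟨z, rfl⟩
          exact ⟨z⁻¹, by rw [inv_pow]⟩ } with hT
    have hHT : H ≤ T.comap (QuotientGroup.mk' N) := by
      apply sup_le
      · rw [Subgroup.closure_le]
        rintro x ⟨g, rfl⟩
        exact ⟨(g : G ⧸ N), by simp [QuotientGroup.mk'_apply]⟩
      · intro c hc
        rw [hD] at hc
        have : ((c : G) : G ⧸ N) = 1 := (QuotientGroup.eq_one_iff c).mpr hc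
        exact ⟨1, by simp [QuotientGroup.mk'_apply, this, one_pow]⟩
    have hsurj : Function.Surjective (fun x : G ⧸ N => x ^ p) := by
      intro y
      obtain ⟨x, rfl⟩ := QuotientGroup.mk_surjective y
      have : x ∈ H := h ▸ Subgroup.mem_top x
      exact hHT this
    have hinj : Function.Injective (fun x : G ⧸ N => x ^ p) :=
      Finite.injective_iff_surjective.mpr hsurj
    obtain ⟨x, hx⟩ := exists_ne (1 : G ⧸ N)
    obtain ⟨k, hk⟩ := (hp.to_quotient N) x
    exact hx (pow_inj_aux hinj x k hk)
  have hH : H = N := by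
    rcases huniq H hHchar with h | h | h
    · exact absurd h hHne
    · exact h
    · exact absurd h hHnt
  have hQpow : ∀ a : G ⧸ N, a ^ p = 1 := by
    intro a
    obtain ⟨x, rfl⟩ := QuotientGroup.mk_surjective a
    show ((x ^ p : G) : G ⧸ N) = 1
    rw [QuotientGroup.eq_one_iff]
    rw [← hH]
    exact (le_sup_left : Subgroup.closure S ≤ H) (Subgroup.subset_closure ⟨x, rfl⟩)
  -- N is abelian (it is the center)
  have hNcomm : ∀ a b : N, a * b = b * a := by
    intro a b
    ext
    have : (a : G) ∈ Subgroup.center G := hZ ▸ a.2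
    exact (Subgroup.mem_center_iff.mp this b).symm
  -- the characteristic subgroup Ω = {x ∈ N | x^p = 1}
  have hNcen : ∀ x : G, x ∈ N → ∀ y : G, Commute x y := by
    intro x hx y
    have : x ∈ Subgroup.center G := hZ ▸ hx
    exact (Subgroup.mem_center_iff.mp this y).symm
  set Om : Subgroup G :=
    { carrier := {x | x ∈ N ∧ x ^ p = 1}
      one_mem' := ⟨N.one_mem, one_pow p⟩
      mul_mem' := by
        rintro a b ⟨haN, hap⟩ ⟨hbN, hbp⟩
        refine ⟨N.mul_mem haN hbN, ?_⟩
        rw [Commute.mul_pow (hNcen a haN b), hap, hbp, one_mul]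
      inv_mem' := by
        rintro a ⟨haN, hap⟩
        exact ⟨N.inv_mem haN, by rw [inv_pow, hap, inv_one]⟩ } with hOm
  have hOmchar : Om.Characteristic := by
    rw [Subgroup.characteristic_iff_comap_eq]
    intro φ
    ext x
    simp only [Subgroup.mem_comap]
    show (φ x ∈ N ∧ (φ x) ^ p = 1) ↔ (x ∈ N ∧ x ^ p = 1)
    rw [← map_pow]
    constructor
    · rintro ⟨h1, h2⟩
      refine ⟨?_, ?_⟩
      · rw [← Subgroup.characteristic_iff_comap_eq.mp hchar φ]; exact h1
      · exact φ.injective (by simpa using h2)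
    · rintro ⟨h1, h2⟩
      refine ⟨?_, by rw [h2, map_one]⟩
      have := Subgroup.characteristic_iff_comap_eq.mp hchar φ
      rw [← this] at h1
      exact h1
  have hOmle : Om ≤ N := fun x hx => hx.1
  have hOmne : Om ≠ ⊥ := by
    have hNnt : Nontrivial N := (Subgroup.nontrivial_iff_ne_bot N).mpr hbot
    obtain ⟨a, ha⟩ := exists_ne (1 : N)
    obtain ⟨k, hk⟩ := (hp.to_subgroup N) a
    obtain ⟨y, hy1, hyp⟩ := exists_pow_p_eq_one a ha k hk
    intro h
    apply hy1
    have hyG : ((y : G)) ^ p = 1 := by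
      have := congrArg (Subtype.val) hyp
      push_cast at this
      exact this
    have : (y : G) ∈ Om := ⟨y.2, hyG⟩
    rw [h, Subgroup.mem_bot] at this
    exact Subtype.ext this
  have hOmnt : Om ≠ ⊤ := by
    intro h
    apply htop
    apply top_le_iff.mp
    rw [← h]
    exact hOmle
  have hOmN : Om = N := by
    rcases huniq Om hOmchar with h | h | h
    · exact absurd h hOmne
    · exact h
    · exact absurd h hOmnt
  refine ⟨hcommQ, hQpow, hNcomm, ?_⟩
  intro a
  have : (a : G) ∈ Om := by rw [hOmN]; exact a.2
  ext
  push_cast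
  exact this.2
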